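/- Let γ₁ ≤ γ₂ and σ > 0. With f(t) = t·Φ(t/σ) + (σ/√(2π))·exp(−t²/(2σ²)), the minimal population hinge loss over b for the classifier with w = +1 on the balanced Gaussian mixture equals f((γ₁−γ₂+2)/2), the minimal population hinge loss for w = −1 equals f((γ₂−γ₁+2)/2), and consequently min_b L(h_{1,b}; μ_c) ≤ min_b L(h_{−1,b}; μ_c). -/

import Mathlib

open MeasureTheory ProbabilityTheory
open Real

/-- CDF of the standard normal distribution `N(0,1)`. -/
noncomputable def Phi (x : ℝ) : ℝ := ((gaussianReal 0 1) (Set.Iic x)).toReal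

/-- `f(t) = t·Φ(t/σ) + (σ/√(2π))·exp(−t²/(2σ²))`. -/
noncomputable def fGap (σ t : ℝ) : ℝ :=
  t * Phi (t / σ) + (σ / Real.sqrt (2 * Real.pi)) * Real.exp (-(t ^ 2) / (2 * σ ^ 2))

/-- The balanced 1-D Gaussian mixture: label `-1` with `x ~ N(γ₁, σ²)`,
label `+1` with `x ~ N(γ₂, σ²)`, each with probability `1/2`. -/
noncomputable def gaussMixBal (γ₁ γ₂ σ : ℝ) : Measure (ℝ × ℝ) :=
  ENNReal.ofReal (1 / 2) • ((gaussianReal γ₁ (Real.toNNReal (σ ^ 2))).map (fun x => (x, -1))) +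
  ENNReal.ofReal (1 / 2) • ((gaussianReal γ₂ (Real.toNNReal (σ ^ 2))).map (fun x => (x, 1)))

/-- Population hinge loss (λ = 0) of the linear classifier `h_{w,b}` under `μ`. -/
noncomputable def hingeLoss (w b : ℝ) (μ : Measure (ℝ × ℝ)) : ℝ :=
  ∫ z, max 0 (1 - z.2 * (w * z.1 + b)) ∂μ


lemma integral_gaussianReal_eq (γ : ℝ) {v : NNReal} (hv : v ≠ 0) (g : ℝ → ℝ) :
    ∫ x, g x ∂(gaussianReal γ v) = ∫ x, gaussianPDFReal γ v x * g x := by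
  rw [gaussianReal_of_var_ne_zero _ hv]
  have : (gaussianPDF γ v) = fun x => ((gaussianPDFReal γ v x).toNNReal : ENNReal) := by
    ext x; simp [gaussianPDF, ENNReal.ofReal]
  rw [this, integral_withDensity_eq_integral_smul
    ((measurable_gaussianPDFReal γ v).real_toNNReal) g]
  congr 1; ext x
  rw [NNReal.smul_def, Real.coe_toNNReal _ (gaussianPDFReal_nonneg γ v x), smul_eq_mul]

lemma integrable_comp_sq (γ : ℝ) {b : ℝ} (hb : 0 < b) :
    Integrable (fun x => x * rexp (-b * (x - γ)^2)) := by
  have h := (integrable_mul_exp_neg_mul_sq hb).add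
    ((integrable_exp_neg_mul_sq hb).const_mul γ)
  have h2 : Integrable (fun x => (x + γ) * rexp (-b * x^2)) := by
    simpa [add_mul, Pi.add_def] using h
  have := h2.comp_sub_right γ
  simpa using this

lemma integrable_max_gauss (γ : ℝ) {v : NNReal} (hv : v ≠ 0) (c d : ℝ) :
    Integrable (fun x => max 0 (c + d * x)) (gaussianReal γ v) := by
  rw [gaussianReal_of_var_ne_zero _ hv, gaussianPDF_def]
  rw [integrable_withDensity_iff ((measurable_gaussianPDFReal γ v).ennreal_ofReal)
    (ae_of_all _ fun x => ENNReal.ofReal_lt_top)]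
  simp_rw [ENNReal.toReal_ofReal (gaussianPDFReal_nonneg γ v _)]
  have hpdfc : Continuous (gaussianPDFReal γ v) := by
    unfold gaussianPDFReal; fun_prop
  apply Integrable.mono' (g := fun x => |c| * gaussianPDFReal γ v x
      + |d| * (|x| * gaussianPDFReal γ v x))
  · apply Integrable.add ((integrable_gaussianPDFReal γ v).const_mul |c|)
    apply Integrable.const_mul
    have hb : 0 < (2 * (v:ℝ))⁻¹ := by positivity
    have h := (integrable_comp_sq γ hb).abs.const_mul (√(2 * π * v))⁻¹
    apply h.congr
    filter_upwards with x
    have he : 0 < rexp (-(2 * (v:ℝ))⁻¹ * (x - γ)^2) := Real.exp_pos _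
    rw [abs_mul, abs_of_pos he]
    unfold gaussianPDFReal
    have : -(x - γ)^2 / (2 * (v:ℝ)) = -(2 * (v:ℝ))⁻¹ * (x - γ)^2 := by ring
    rw [this]
    have h0 : (0:ℝ) ≤ (√(2 * π * v))⁻¹ := by positivity
    ring
  · exact ((continuous_const.max (by fun_prop)).mul hpdfc).aestronglyMeasurable
  · filter_upwards with x
    have h1 : max 0 (c + d * x) ≤ |c| + |d| * |x| := by
      apply max_le (by positivity)
      calc c + d * x ≤ |c + d * x| := le_abs_self _
        _ ≤ |c| + |d * x| := abs_add_le _ _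
        _ = |c| + |d| * |x| := by rw [abs_mul]
    have h2 : 0 ≤ gaussianPDFReal γ v x := gaussianPDFReal_nonneg γ v x
    rw [norm_mul, norm_of_nonneg (le_max_left _ _), norm_of_nonneg h2]
    ring_nf
    nlinarith [abs_nonneg c, abs_nonneg d, abs_nonneg x, mul_le_mul_of_nonneg_right h1 h2]


section Key
variable {σ : ℝ} (hσ : 0 < σ)

lemma v_ne (hσ : 0 < σ) : (σ^2).toNNReal ≠ 0 := by
  simp [Real.toNNReal_eq_zero]; positivity

lemma v_coe (hσ : 0 < σ) : (((σ^2).toNNReal : NNReal) : ℝ) = σ^2 := by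
  rw [Real.coe_toNNReal _ (by positivity)]

-- set integral of pdf over Ici(-t) equals Phi (t/σ)
lemma pdf_Ici (hσ : 0 < σ) (t : ℝ) :
    ∫ x in Set.Ici (-t), gaussianPDFReal 0 (σ^2).toNNReal x = Phi (t / σ) := by
  have hv := v_ne hσ
  have h1 : ENNReal.ofReal (∫ x in Set.Ici (-t), gaussianPDFReal 0 (σ^2).toNNReal x)
      = gaussianReal 0 (σ^2).toNNReal (Set.Ici (-t)) :=
    (gaussianReal_apply_eq_integral 0 hv _).symm
  have hnn : 0 ≤ ∫ x in Set.Ici (-t), gaussianPDFReal 0 (σ^2).toNNReal x :=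
    integral_nonneg fun x => gaussianPDFReal_nonneg _ _ _
  have h2 : gaussianReal 0 (σ^2).toNNReal = (gaussianReal 0 1).map (fun x => -σ * x) := by
    rw [show (fun x => -σ * x) = ((-σ) * ·) from rfl, gaussianReal_map_const_mul (-σ)]
    congr 1
    · ring
    · ext; push_cast; rw [v_coe hσ]; ring
  have h3 : (fun x => -σ * x) ⁻¹' (Set.Ici (-t)) = Set.Iic (t / σ) := by
    ext x
    simp only [Set.mem_preimage, Set.mem_Ici, Set.mem_Iic]
    rw [le_div_iff₀ hσ]
    constructor <;> intro h <;> nlinarith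
  have h4 : gaussianReal 0 (σ^2).toNNReal (Set.Ici (-t))
      = gaussianReal 0 1 (Set.Iic (t / σ)) := by
    rw [h2, Measure.map_apply (measurable_const_mul (-σ)) measurableSet_Ici, h3]
  have := congrArg ENNReal.toReal h1
  rw [ENNReal.toReal_ofReal hnn] at this
  rw [this, h4, Phi]

lemma pdf_moment (hσ : 0 < σ) (t : ℝ) :
    ∫ x in Set.Ici (-t), gaussianPDFReal 0 (σ^2).toNNReal x * x
      = (σ / Real.sqrt (2 * Real.pi)) * Real.exp (-(t^2) / (2 * σ^2)) := by
  have hvc := v_coe hσ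
  have hb : (0:ℝ) < (2 * σ^2)⁻¹ := by positivity
  have hpdf : ∀ x, gaussianPDFReal 0 (σ^2).toNNReal x * x
      = (√(2 * π * σ^2))⁻¹ * (x * rexp (-(2*σ^2)⁻¹ * x^2)) := by
    intro x
    unfold gaussianPDFReal
    rw [hvc]
    have : -(x - 0)^2 / (2 * σ^2) = -(2*σ^2)⁻¹ * x^2 := by ring
    rw [this]; ring
  simp_rw [hpdf]
  rw [MeasureTheory.integral_Ici_eq_integral_Ioi, MeasureTheory.integral_const_mul]
  have hF : ∀ x ∈ Set.Ici (-t), HasDerivAt (fun y => -σ^2 * rexp (-(2*σ^2)⁻¹ * y^2))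
      (x * rexp (-(2*σ^2)⁻¹ * x^2)) x := by
    intro x _
    have h1 := (hasDerivAt_pow 2 x).const_mul (-(2*σ^2)⁻¹)
    have h2 := (h1.exp).const_mul (-σ^2)
    refine h2.congr_deriv ?_
    norm_num only [pow_one]
    field_simp
  have hint : IntegrableOn (fun x => x * rexp (-(2*σ^2)⁻¹ * x^2)) (Set.Ioi (-t)) := by
    have := integrable_mul_exp_neg_mul_sq hb
    exact this.integrableOn
  have htend : Filter.Tendsto (fun y => -σ^2 * rexp (-(2*σ^2)⁻¹ * y^2)) Filter.atTop (nhds 0) := by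
    have h1 : Filter.Tendsto (fun y : ℝ => -(2*σ^2)⁻¹ * y^2) Filter.atTop Filter.atBot := by
      apply Filter.Tendsto.const_mul_atTop_of_neg (by simpa using hb)
      exact Filter.tendsto_pow_atTop (by norm_num)
    have := (Real.tendsto_exp_atBot.comp h1).const_mul (-σ^2)
    simpa using this
  rw [integral_Ioi_of_hasDerivAt_of_tendsto' hF hint htend]
  have hsqrt : √(2 * π * σ^2) = √(2 * π) * σ := by
    rw [Real.sqrt_mul (by positivity), Real.sqrt_sq hσ.le]
  rw [hsqrt]
  have hpi : (0:ℝ) < √(2*π) := Real.sqrt_pos.mpr (by positivity)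
  rw [show -(t^2)/(2*σ^2) = -(2*σ^2)⁻¹ * (-t)^2 by ring]
  field_simp
  ring

end Key

section Key2
variable {σ : ℝ}

lemma integrable_pdf_mul_id (hσ : 0 < σ) :
    Integrable (fun x => gaussianPDFReal 0 (σ^2).toNNReal x * x) := by
  have hb : (0:ℝ) < (2*σ^2)⁻¹ := by positivity
  have h := (integrable_mul_exp_neg_mul_sq hb).const_mul (√(2 * π * σ^2))⁻¹
  apply h.congr
  filter_upwards with x
  unfold gaussianPDFReal
  rw [v_coe hσ]
  rw [show -(x - 0)^2 / (2 * σ^2) = -(2*σ^2)⁻¹ * x^2 by ring]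
  ring

lemma gauss_max (hσ : 0 < σ) (t : ℝ) :
    ∫ x, max 0 (t + x) ∂(gaussianReal 0 (σ^2).toNNReal) = fGap σ t := by
  have hv := v_ne hσ
  rw [integral_gaussianReal_eq 0 hv]
  have hind : ∀ x, gaussianPDFReal 0 (σ^2).toNNReal x * max 0 (t + x)
      = Set.indicator (Set.Ici (-t))
        (fun x => t * gaussianPDFReal 0 (σ^2).toNNReal x
          + gaussianPDFReal 0 (σ^2).toNNReal x * x) x := by
    intro x
    by_cases hx : x ∈ Set.Ici (-t)
    · rw [Set.indicator_of_mem hx]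
      have : max 0 (t + x) = t + x := max_eq_right (by simp at hx; linarith)
      rw [this]; ring
    · rw [Set.indicator_of_notMem hx]
      simp only [Set.mem_Ici, not_le] at hx
      rw [max_eq_left (by linarith)]
      ring
  simp_rw [hind]
  rw [integral_indicator measurableSet_Ici,
    integral_add (((integrable_gaussianPDFReal _ _).const_mul t).restrict)
      ((integrable_pdf_mul_id hσ).restrict),
    MeasureTheory.integral_const_mul, pdf_Ici hσ t, pdf_moment hσ t, fGap]

lemma gauss_max_shift (hσ : 0 < σ) (γ c : ℝ) :
    ∫ x, max 0 (c + x) ∂(gaussianReal γ (σ^2).toNNReal) = fGap σ (c + γ) := by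
  have hmap : gaussianReal γ (σ^2).toNNReal
      = (gaussianReal 0 (σ^2).toNNReal).map (· + γ) := by
    rw [gaussianReal_map_add_const γ, zero_add]
  rw [hmap, integral_map (measurable_add_const γ).aemeasurable
    (Continuous.aestronglyMeasurable (show Continuous fun x:ℝ => max 0 (c+x) from (continuous_const.max (continuous_const.add continuous_id))))]
  simp only [show ∀ x:ℝ, c + (x + γ) = (c+γ) + x from fun x => by ring]
  exact gauss_max hσ (c+γ)

lemma gauss_max_neg (hσ : 0 < σ) (γ c : ℝ) :
    ∫ x, max 0 (c - x) ∂(gaussianReal γ (σ^2).toNNReal) = fGap σ (c - γ) := by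
  have hmap : gaussianReal (-γ) (σ^2).toNNReal
      = (gaussianReal γ (σ^2).toNNReal).map ((-1 : ℝ) * ·) := by
    rw [gaussianReal_map_const_mul]
    congr 1
    · ring
    · ext; push_cast; ring
  have h := gauss_max_shift hσ (-γ) c
  rw [hmap, integral_map (measurable_const_mul (-1)).aemeasurable
    (Continuous.aestronglyMeasurable (show Continuous fun x:ℝ => max 0 (c+x) from (continuous_const.max (continuous_const.add continuous_id))))] at h
  simp only [show ∀ x:ℝ, c + (-1) * x = c - x from fun x => by ring] at h
  rw [h]; ring_nf

end Key2

section Main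
variable {σ : ℝ}

lemma integrable_max1 (hσ : 0 < σ) (γ c : ℝ) :
    Integrable (fun x => max 0 (c + x)) (gaussianReal γ (σ^2).toNNReal) := by
  have := integrable_max_gauss γ (v_ne hσ) c 1
  simpa using this

lemma fGap_mono (hσ : 0 < σ) : Monotone (fGap σ) := by
  intro a b hab
  rw [← gauss_max hσ a, ← gauss_max hσ b]
  exact integral_mono (integrable_max1 hσ 0 a) (integrable_max1 hσ 0 b)
    (fun x => max_le_max le_rfl (by linarith))

lemma fGap_midpoint (hσ : 0 < σ) (a b : ℝ) :
    fGap σ ((a + b) / 2) ≤ (fGap σ a + fGap σ b) / 2 := by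
  have ia := integrable_max1 hσ 0 a
  have ib := integrable_max1 hσ 0 b
  have h2 : (fGap σ a + fGap σ b) / 2
      = ∫ x, (max 0 (a + x) + max 0 (b + x)) / 2 ∂(gaussianReal 0 (σ^2).toNNReal) := by
    rw [integral_div, integral_add ia ib, gauss_max hσ, gauss_max hσ]
  rw [h2, ← gauss_max hσ ((a+b)/2)]
  refine integral_mono (integrable_max1 hσ 0 _) ((ia.add ib).div_const 2) (fun x => ?_)
  have h0a := le_max_left 0 (a + x)
  have h0b := le_max_left 0 (b + x)
  have haa := le_max_right 0 (a + x)
  have hbb := le_max_right 0 (b + x)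
  apply max_le <;> simp only [] <;> linarith


lemma mix_integral (hσ : 0 < σ) (γ₁ γ₂ w b : ℝ) :
    hingeLoss w b (gaussMixBal γ₁ γ₂ σ) =
      ((∫ x, max 0 ((1+b) + w*x) ∂(gaussianReal γ₁ (σ^2).toNNReal))
        + ∫ x, max 0 ((1-b) + (-w)*x) ∂(gaussianReal γ₂ (σ^2).toNNReal)) / 2 := by
  have hv := v_ne hσ
  have hg : Continuous fun z : ℝ×ℝ => max 0 (1 - z.2*(w*z.1+b)) := by
    apply continuous_const.max; fun_prop
  have hm1 : Measurable fun x:ℝ => (x,(-1:ℝ)) := measurable_id.prodMk measurable_const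
  have hm2 : Measurable fun x:ℝ => (x,(1:ℝ)) := measurable_id.prodMk measurable_const
  have hi1 : Integrable (fun z : ℝ×ℝ => max 0 (1 - z.2*(w*z.1+b)))
      ((gaussianReal γ₁ (σ^2).toNNReal).map (fun x => (x, (-1:ℝ)))) := by
    rw [integrable_map_measure hg.aestronglyMeasurable hm1.aemeasurable]
    apply (integrable_max_gauss γ₁ hv (1+b) w).congr
    filter_upwards with x
    simp only [Function.comp]; congr 1; ring
  have hi2 : Integrable (fun z : ℝ×ℝ => max 0 (1 - z.2*(w*z.1+b)))
      ((gaussianReal γ₂ (σ^2).toNNReal).map (fun x => (x, (1:ℝ)))) := by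
    rw [integrable_map_measure hg.aestronglyMeasurable hm2.aemeasurable]
    apply (integrable_max_gauss γ₂ hv (1-b) (-w)).congr
    filter_upwards with x
    simp only [Function.comp]; congr 1; ring
  have e1 : ∫ z, max 0 (1 - z.2*(w*z.1+b))
        ∂((gaussianReal γ₁ (σ^2).toNNReal).map (fun x => (x, (-1:ℝ))))
      = ∫ x, max 0 ((1+b) + w*x) ∂(gaussianReal γ₁ (σ^2).toNNReal) := by
    rw [integral_map hm1.aemeasurable hg.aestronglyMeasurable]
    congr 1; funext x; congr 1; ring
  have e2 : ∫ z, max 0 (1 - z.2*(w*z.1+b))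
        ∂((gaussianReal γ₂ (σ^2).toNNReal).map (fun x => (x, (1:ℝ))))
      = ∫ x, max 0 ((1-b) + (-w)*x) ∂(gaussianReal γ₂ (σ^2).toNNReal) := by
    rw [integral_map hm2.aemeasurable hg.aestronglyMeasurable]
    congr 1; funext x; congr 1; ring
  unfold hingeLoss gaussMixBal
  rw [integral_add_measure (hi1.smul_measure ENNReal.ofReal_ne_top)
    (hi2.smul_measure ENNReal.ofReal_ne_top),
    integral_smul_measure, integral_smul_measure,
    ENNReal.toReal_ofReal (by norm_num : (0:ℝ) ≤ 1/2), e1, e2]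
  simp only [smul_eq_mul]
  ring

lemma hinge1_eq (hσ : 0 < σ) (γ₁ γ₂ b : ℝ) :
    hingeLoss 1 b (gaussMixBal γ₁ γ₂ σ)
      = (fGap σ (1 + b + γ₁) + fGap σ (1 - b - γ₂)) / 2 := by
  rw [mix_integral hσ]
  simp only [one_mul, neg_one_mul]
  simp only [show ∀ x:ℝ, 1 - b + -x = (1-b) - x from fun x => by ring]
  rw [gauss_max_shift hσ γ₁ (1+b), gauss_max_neg hσ γ₂ (1-b)]

lemma hinge2_eq (hσ : 0 < σ) (γ₁ γ₂ b : ℝ) :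
    hingeLoss (-1) b (gaussMixBal γ₁ γ₂ σ)
      = (fGap σ (1 + b - γ₁) + fGap σ (1 - b + γ₂)) / 2 := by
  rw [mix_integral hσ]
  simp only [neg_neg, one_mul]
  simp only [show ∀ x:ℝ, 1 + b + (-1) * x = (1+b) - x from fun x => by ring]
  rw [gauss_max_neg hσ γ₁ (1+b), gauss_max_shift hσ γ₂ (1-b)]

theorem stmt5 (γ₁ γ₂ σ : ℝ) (hγ : γ₁ ≤ γ₂) (hσ : 0 < σ) :
    IsLeast (Set.range (fun b => hingeLoss 1 b (gaussMixBal γ₁ γ₂ σ)))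
      (fGap σ ((γ₁ - γ₂ + 2) / 2)) ∧
    IsLeast (Set.range (fun b => hingeLoss (-1) b (gaussMixBal γ₁ γ₂ σ)))
      (fGap σ ((γ₂ - γ₁ + 2) / 2)) ∧
    fGap σ ((γ₁ - γ₂ + 2) / 2) ≤ fGap σ ((γ₂ - γ₁ + 2) / 2) := by
  refine ⟨⟨⟨-(γ₁+γ₂)/2, ?_⟩, ?_⟩, ⟨⟨(γ₁+γ₂)/2, ?_⟩, ?_⟩, ?_⟩
  · show hingeLoss 1 (-(γ₁+γ₂)/2) (gaussMixBal γ₁ γ₂ σ) = _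
    rw [hinge1_eq hσ, show 1 + -(γ₁+γ₂)/2 + γ₁ = (γ₁ - γ₂ + 2)/2 by ring,
      show 1 - -(γ₁+γ₂)/2 - γ₂ = (γ₁ - γ₂ + 2)/2 by ring]
    ring
  · rintro v ⟨b, rfl⟩
    simp only [hinge1_eq hσ]
    calc fGap σ ((γ₁ - γ₂ + 2)/2)
        = fGap σ (((1 + b + γ₁) + (1 - b - γ₂))/2) := by ring_nf
      _ ≤ (fGap σ (1 + b + γ₁) + fGap σ (1 - b - γ₂))/2 := fGap_midpoint hσ _ _
  · show hingeLoss (-1) ((γ₁+γ₂)/2) (gaussMixBal γ₁ γ₂ σ) = _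
    rw [hinge2_eq hσ, show 1 + (γ₁+γ₂)/2 - γ₁ = (γ₂ - γ₁ + 2)/2 by ring,
      show 1 - (γ₁+γ₂)/2 + γ₂ = (γ₂ - γ₁ + 2)/2 by ring]
    ring
  · rintro v ⟨b, rfl⟩
    simp only [hinge2_eq hσ]
    calc fGap σ ((γ₂ - γ₁ + 2)/2)
        = fGap σ (((1 + b - γ₁) + (1 - b + γ₂))/2) := by ring_nf
      _ ≤ (fGap σ (1 + b - γ₁) + fGap σ (1 - b + γ₂))/2 := fGap_midpoint hσ _ _
  · exact fGap_mono hσ (by linarith)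

end Main
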